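/- Let b > 1/2 and n_0, n_1, n_2, n_3 be nonnegative reals and α > 0. Then sup_{τ ∈ ℝ} ( ∫∫∫_{τ_1 − τ_2 + τ_3 = τ} ⟨τ − n_0^{2α}⟩^{−2b} ⟨τ_1 − n_1^{2α}⟩^{−2b} ⟨τ_2 − n_2^{2α}⟩^{−2b} ⟨τ_3 − n_3^{2α}⟩^{−2b} dτ_1 dτ_2 )^{1/2} ≤ C ⟨n_0^{2α} − n_1^{2α} + n_2^{2α} − n_3^{2α}⟩^{−b}. -/

import Mathlib

open MeasureTheory

/-- Japanese bracket `⟨x⟩ = (1 + x²)^(1/2)`. -/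
noncomputable def jb (x : ℝ) : ℝ := Real.sqrt (1 + x^2)

lemma jb_pos (x : ℝ) : 0 < jb x := Real.sqrt_pos.mpr (by positivity)

lemma jb_one_le (x : ℝ) : 1 ≤ jb x := by
  have := Real.sqrt_le_sqrt (show (1:ℝ) ≤ 1 + x^2 by nlinarith)
  simpa [jb] using this

lemma jb_neg (x : ℝ) : jb (-x) = jb x := by simp [jb]

lemma jb_rpow_pos (x p : ℝ) : 0 < jb x ^ p := Real.rpow_pos_of_pos (jb_pos x) p

lemma jb_rpow_nonneg (x p : ℝ) : 0 ≤ jb x ^ p := (jb_rpow_pos x p).le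

lemma jb_add_le (u v : ℝ) : jb (u + v) ≤ Real.sqrt 2 * (jb u * jb v) := by
  rw [jb, jb, jb, ← Real.sqrt_mul (by positivity), ← Real.sqrt_mul (by norm_num)]
  exact Real.sqrt_le_sqrt (by nlinarith [sq_nonneg (u - v), sq_nonneg (u*v)])

lemma jb_rpow_eq (x : ℝ) (p : ℝ) : jb x ^ p = (1 + x^2) ^ (p/2) := by
  rw [jb, Real.sqrt_eq_rpow, ← Real.rpow_mul (by positivity)]
  ring_nf

lemma f_integrable {b : ℝ} (hb : 1/2 < b) :
    Integrable (fun t : ℝ => jb t ^ (-(2*b))) := by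
  have h : (fun t : ℝ => jb t ^ (-(2*b))) =
      fun t : ℝ => ((1 : ℝ) + ‖t‖ ^ 2) ^ (-(2*b) / 2) := by
    funext t
    rw [jb_rpow_eq, Real.norm_eq_abs, sq_abs]
  rw [h]
  exact integrable_rpow_neg_one_add_norm_sq (by simpa using by linarith)

lemma two_rpow_aux {b : ℝ} : (Real.sqrt 2) ^ (-(2*b)) = 2 ^ (-b) := by
  rw [Real.sqrt_eq_rpow, ← Real.rpow_mul (by norm_num)]
  congr 1
  ring

lemma jb_prod_rpow_le {b : ℝ} (hb : 0 < b) (u v : ℝ) :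
    jb u ^ (-(2*b)) * jb v ^ (-(2*b)) ≤ 2 ^ b * jb (u - v) ^ (-(2*b)) := by
  have h1 : jb (u - v) ≤ Real.sqrt 2 * (jb u * jb v) := by
    have h2 := jb_add_le u (-v)
    rw [jb_neg] at h2
    simpa [sub_eq_add_neg] using h2
  have hs2 : (0:ℝ) < Real.sqrt 2 := by positivity
  have hdiv : jb (u - v) / Real.sqrt 2 ≤ jb u * jb v := by
    rw [div_le_iff₀ hs2]; nlinarith
  calc jb u ^ (-(2*b)) * jb v ^ (-(2*b))
      = (jb u * jb v) ^ (-(2*b)) := (Real.mul_rpow (jb_pos u).le (jb_pos v).le).symm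
    _ ≤ (jb (u - v) / Real.sqrt 2) ^ (-(2*b)) :=
        Real.rpow_le_rpow_of_nonpos (div_pos (jb_pos _) hs2) hdiv (by linarith)
    _ = jb (u - v) ^ (-(2*b)) / (Real.sqrt 2) ^ (-(2*b)) :=
        Real.div_rpow (jb_pos _).le (Real.sqrt_nonneg 2) _
    _ = 2 ^ b * jb (u - v) ^ (-(2*b)) := by
        rw [two_rpow_aux, Real.rpow_neg (by norm_num : (0:ℝ) ≤ 2), div_inv_eq_mul]
        ring

lemma f_cont {b : ℝ} (a : ℝ) : Continuous (fun t : ℝ => jb (t - a) ^ (-(2*b))) := by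
  have h1 : Continuous fun t : ℝ => jb (t - a) := by
    have : (fun t : ℝ => jb (t - a)) = fun t : ℝ => Real.sqrt (1 + (t - a)^2) := rfl
    rw [this]; continuity
  exact h1.rpow_const (fun t => Or.inl (jb_pos _).ne')

lemma f_prod_integrable {b : ℝ} (hb : 1/2 < b) (a c : ℝ) :
    Integrable (fun t : ℝ => jb (t - a) ^ (-(2*b)) * jb (t - c) ^ (-(2*b))) := by
  refine Integrable.bdd_mul ((f_integrable hb).comp_sub_right c)
    (f_cont a).aestronglyMeasurable (c := 1) (ae_of_all _ fun t => ?_)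
  rw [Real.norm_eq_abs, abs_of_nonneg (jb_rpow_nonneg _ _)]
  exact Real.rpow_le_one_of_one_le_of_nonpos (jb_one_le _) (by linarith)

lemma key_lemma {b : ℝ} (hb0 : 0 < b) (k u : ℝ) (hu : |k|/2 ≤ |u|) :
    jb u ^ (-(2*b)) ≤ 2^(2*b) * jb k ^ (-(2*b)) := by
  have hsq : k^2/4 ≤ u^2 := by
    have h := pow_le_pow_left₀ (by positivity) hu 2
    rw [div_pow, sq_abs, sq_abs] at h
    norm_num at h
    linarith
  have hjb : jb k / 2 ≤ jb u := by
    rw [div_le_iff₀ (by norm_num : (0:ℝ) < 2)]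
    rw [jb, jb]
    have h4 : Real.sqrt (1 + u^2) * 2 = Real.sqrt ((1 + u^2) * 4) := by
      rw [Real.sqrt_mul (by positivity), show Real.sqrt 4 = 2 by
        rw [show (4:ℝ) = 2^2 by norm_num, Real.sqrt_sq (by norm_num)]]
    rw [h4]
    exact Real.sqrt_le_sqrt (by linarith)
  calc jb u ^ (-(2*b)) ≤ (jb k / 2) ^ (-(2*b)) :=
        Real.rpow_le_rpow_of_nonpos (div_pos (jb_pos _) (by norm_num)) hjb (by linarith)
    _ = jb k ^ (-(2*b)) / 2 ^ (-(2*b)) := Real.div_rpow (jb_pos _).le (by norm_num) _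
    _ = 2^(2*b) * jb k ^ (-(2*b)) := by
        rw [Real.rpow_neg (by norm_num : (0:ℝ) ≤ 2), div_inv_eq_mul]
        ring

lemma conv {b : ℝ} (hb : 1/2 < b) : ∃ C : ℝ, 0 < C ∧ ∀ a c : ℝ,
    (∫ t : ℝ, jb (t - a) ^ (-(2*b)) * jb (t - c) ^ (-(2*b))) ≤ C * jb (a - c) ^ (-(2*b)) := by
  have hb0 : 0 < b := by linarith
  have h2pos : (0:ℝ) < 2^(2*b) := Real.rpow_pos_of_pos (by norm_num) _
  have hJ : 0 ≤ ∫ t : ℝ, jb t ^ (-(2*b)) := integral_nonneg fun t => jb_rpow_nonneg _ _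
  refine ⟨2^(2*b) * (2 * ∫ t : ℝ, jb t ^ (-(2*b))) + 1, by positivity, fun a c => ?_⟩
  have hD0 : 0 < jb (a - c) ^ (-(2*b)) := jb_rpow_pos _ _
  have bound : ∀ t : ℝ, jb (t - a) ^ (-(2*b)) * jb (t - c) ^ (-(2*b)) ≤
      (2^(2*b) * jb (a - c) ^ (-(2*b))) * (jb (t - a) ^ (-(2*b)) + jb (t - c) ^ (-(2*b))) := by
    intro t
    have hfa : (0:ℝ) ≤ jb (t - a) ^ (-(2*b)) := jb_rpow_nonneg _ _
    have hfc : (0:ℝ) ≤ jb (t - c) ^ (-(2*b)) := jb_rpow_nonneg _ _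
    have hM : (0:ℝ) ≤ 2^(2*b) * jb (a - c) ^ (-(2*b)) := by positivity
    rcases le_or_gt (|a - c|/2) (|t - a|) with h | h
    · have hk := key_lemma hb0 (a - c) (t - a) h
      nlinarith
    · have htri : |a - c| ≤ |a - t| + |t - c| := abs_sub_le a t c
      rw [abs_sub_comm a t] at htri
      have hk := key_lemma hb0 (a - c) (t - c) (by linarith)
      nlinarith
  have hfa : Integrable (fun t : ℝ => jb (t - a) ^ (-(2*b))) :=
    (f_integrable hb).comp_sub_right a
  have hfc : Integrable (fun t : ℝ => jb (t - c) ^ (-(2*b))) :=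
    (f_integrable hb).comp_sub_right c
  calc (∫ t : ℝ, jb (t - a) ^ (-(2*b)) * jb (t - c) ^ (-(2*b)))
      ≤ ∫ t : ℝ, (2^(2*b) * jb (a - c) ^ (-(2*b))) *
          (jb (t - a) ^ (-(2*b)) + jb (t - c) ^ (-(2*b))) :=
        integral_mono_of_nonneg
          (ae_of_all _ fun t => mul_nonneg (jb_rpow_nonneg _ _) (jb_rpow_nonneg _ _))
          ((hfa.add hfc).const_mul _) (ae_of_all _ bound)
    _ = (2^(2*b) * jb (a - c) ^ (-(2*b))) *
          ((∫ t : ℝ, jb (t - a) ^ (-(2*b))) + ∫ t : ℝ, jb (t - c) ^ (-(2*b))) := by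
        rw [integral_const_mul, integral_add hfa hfc]
    _ = (2^(2*b) * jb (a - c) ^ (-(2*b))) *
          ((∫ t : ℝ, jb t ^ (-(2*b))) + ∫ t : ℝ, jb t ^ (-(2*b))) := by
        rw [integral_sub_right_eq_self (fun t : ℝ => jb t ^ (-(2*b))) a,
            integral_sub_right_eq_self (fun t : ℝ => jb t ^ (-(2*b))) c]
    _ ≤ (2^(2*b) * (2 * ∫ t : ℝ, jb t ^ (-(2*b))) + 1) * jb (a - c) ^ (-(2*b)) := by
        nlinarith
lemma main_est {b : ℝ} (hb : 1/2 < b) : ∃ C : ℝ, 0 < C ∧ ∀ m₀ m₁ m₂ m₃ τ : ℝ,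
    (∫ τ₁ : ℝ, ∫ τ₂ : ℝ,
        jb (τ - m₀) ^ (-(2*b)) * jb (τ₁ - m₁) ^ (-(2*b)) *
        jb (τ₂ - m₂) ^ (-(2*b)) * jb ((τ - τ₁ + τ₂) - m₃) ^ (-(2*b))) ^ (1/2 : ℝ)
      ≤ C * jb (m₀ - m₁ + m₂ - m₃) ^ (-b) := by
  have hb0 : 0 < b := by linarith
  obtain ⟨Cc, hCc, hconv⟩ := conv hb
  have h2b : (0:ℝ) < 2^b := Real.rpow_pos_of_pos (by norm_num) _
  refine ⟨(Cc * Cc * 2^b) ^ (1/2 : ℝ), Real.rpow_pos_of_pos (by positivity) _, ?_⟩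
  intro m₀ m₁ m₂ m₃ τ
  have hA : (0:ℝ) ≤ jb (τ - m₀) ^ (-(2*b)) := jb_rpow_nonneg _ _
  -- rewrite inner integral
  have step1 : ∀ τ₁ : ℝ, (∫ τ₂ : ℝ,
        jb (τ - m₀) ^ (-(2*b)) * jb (τ₁ - m₁) ^ (-(2*b)) *
        jb (τ₂ - m₂) ^ (-(2*b)) * jb ((τ - τ₁ + τ₂) - m₃) ^ (-(2*b)))
      = (jb (τ - m₀) ^ (-(2*b)) * jb (τ₁ - m₁) ^ (-(2*b))) *
        ∫ τ₂ : ℝ, jb (τ₂ - m₂) ^ (-(2*b)) * jb (τ₂ - (m₃ - τ + τ₁)) ^ (-(2*b)) := by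
    intro τ₁
    rw [← integral_const_mul]
    congr 1
    funext τ₂
    rw [show (τ - τ₁ + τ₂) - m₃ = τ₂ - (m₃ - τ + τ₁) by ring]
    ring
  -- bound on intermediate integrand
  have step2 : ∀ τ₁ : ℝ, (∫ τ₂ : ℝ,
        jb (τ - m₀) ^ (-(2*b)) * jb (τ₁ - m₁) ^ (-(2*b)) *
        jb (τ₂ - m₂) ^ (-(2*b)) * jb ((τ - τ₁ + τ₂) - m₃) ^ (-(2*b)))
      ≤ (jb (τ - m₀) ^ (-(2*b)) * Cc) *
        (jb (τ₁ - m₁) ^ (-(2*b)) * jb (τ₁ - (τ + m₂ - m₃)) ^ (-(2*b))) := by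
    intro τ₁
    rw [step1 τ₁]
    have h := hconv m₂ (m₃ - τ + τ₁)
    rw [show m₂ - (m₃ - τ + τ₁) = -(τ₁ - (τ + m₂ - m₃)) by ring, jb_neg] at h
    calc (jb (τ - m₀) ^ (-(2*b)) * jb (τ₁ - m₁) ^ (-(2*b))) *
          ∫ τ₂ : ℝ, jb (τ₂ - m₂) ^ (-(2*b)) * jb (τ₂ - (m₃ - τ + τ₁)) ^ (-(2*b))
        ≤ (jb (τ - m₀) ^ (-(2*b)) * jb (τ₁ - m₁) ^ (-(2*b))) *
          (Cc * jb (τ₁ - (τ + m₂ - m₃)) ^ (-(2*b))) :=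
          mul_le_mul_of_nonneg_left h (mul_nonneg hA (jb_rpow_nonneg _ _))
      _ = (jb (τ - m₀) ^ (-(2*b)) * Cc) *
          (jb (τ₁ - m₁) ^ (-(2*b)) * jb (τ₁ - (τ + m₂ - m₃)) ^ (-(2*b))) := by ring
  -- outer integral bound
  have step3 : (∫ τ₁ : ℝ, ∫ τ₂ : ℝ,
        jb (τ - m₀) ^ (-(2*b)) * jb (τ₁ - m₁) ^ (-(2*b)) *
        jb (τ₂ - m₂) ^ (-(2*b)) * jb ((τ - τ₁ + τ₂) - m₃) ^ (-(2*b)))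
      ≤ (jb (τ - m₀) ^ (-(2*b)) * Cc) *
        ∫ τ₁ : ℝ, jb (τ₁ - m₁) ^ (-(2*b)) * jb (τ₁ - (τ + m₂ - m₃)) ^ (-(2*b)) := by
    rw [← integral_const_mul]
    refine integral_mono_of_nonneg (ae_of_all _ fun τ₁ => ?_)
      (((f_prod_integrable hb m₁ (τ + m₂ - m₃)).const_mul _)) (ae_of_all _ step2)
    exact integral_nonneg fun τ₂ => by
      exact mul_nonneg (mul_nonneg (mul_nonneg (jb_rpow_nonneg _ _) (jb_rpow_nonneg _ _))
        (jb_rpow_nonneg _ _)) (jb_rpow_nonneg _ _)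
  -- apply conv again and pointwise lemma
  have step4 : (jb (τ - m₀) ^ (-(2*b)) * Cc) *
        (∫ τ₁ : ℝ, jb (τ₁ - m₁) ^ (-(2*b)) * jb (τ₁ - (τ + m₂ - m₃)) ^ (-(2*b)))
      ≤ (Cc * Cc) * (2^b * jb (m₀ - m₁ + m₂ - m₃) ^ (-(2*b))) := by
    have h5 : jb (τ - m₀) ^ (-(2*b)) * jb (τ - (m₁ - m₂ + m₃)) ^ (-(2*b))
        ≤ 2^b * jb (m₀ - m₁ + m₂ - m₃) ^ (-(2*b)) := by
      have := jb_prod_rpow_le hb0 (τ - m₀) (τ - (m₁ - m₂ + m₃))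
      rw [show (τ - m₀) - (τ - (m₁ - m₂ + m₃)) = -(m₀ - m₁ + m₂ - m₃) by ring, jb_neg] at this
      exact this
    have h' := hconv m₁ (τ + m₂ - m₃)
    rw [show m₁ - (τ + m₂ - m₃) = -(τ - (m₁ - m₂ + m₃)) by ring, jb_neg] at h'
    calc (jb (τ - m₀) ^ (-(2*b)) * Cc) *
          (∫ τ₁ : ℝ, jb (τ₁ - m₁) ^ (-(2*b)) * jb (τ₁ - (τ + m₂ - m₃)) ^ (-(2*b)))
        ≤ (jb (τ - m₀) ^ (-(2*b)) * Cc) * (Cc * jb (τ - (m₁ - m₂ + m₃)) ^ (-(2*b))) :=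
          mul_le_mul_of_nonneg_left h' (mul_nonneg hA hCc.le)
      _ = (Cc * Cc) * (jb (τ - m₀) ^ (-(2*b)) * jb (τ - (m₁ - m₂ + m₃)) ^ (-(2*b))) := by ring
      _ ≤ (Cc * Cc) * (2^b * jb (m₀ - m₁ + m₂ - m₃) ^ (-(2*b))) :=
          mul_le_mul_of_nonneg_left h5 (by positivity)
  have hI0 : (0:ℝ) ≤ ∫ τ₁ : ℝ, ∫ τ₂ : ℝ,
        jb (τ - m₀) ^ (-(2*b)) * jb (τ₁ - m₁) ^ (-(2*b)) *
        jb (τ₂ - m₂) ^ (-(2*b)) * jb ((τ - τ₁ + τ₂) - m₃) ^ (-(2*b)) :=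
    integral_nonneg fun τ₁ => integral_nonneg fun τ₂ =>
      mul_nonneg (mul_nonneg (mul_nonneg (jb_rpow_nonneg _ _) (jb_rpow_nonneg _ _))
        (jb_rpow_nonneg _ _)) (jb_rpow_nonneg _ _)
  have hIle := le_trans step3 step4
  calc (∫ τ₁ : ℝ, ∫ τ₂ : ℝ,
        jb (τ - m₀) ^ (-(2*b)) * jb (τ₁ - m₁) ^ (-(2*b)) *
        jb (τ₂ - m₂) ^ (-(2*b)) * jb ((τ - τ₁ + τ₂) - m₃) ^ (-(2*b))) ^ (1/2 : ℝ)
      ≤ ((Cc * Cc * 2^b) * jb (m₀ - m₁ + m₂ - m₃) ^ (-(2*b))) ^ (1/2 : ℝ) :=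
        Real.rpow_le_rpow hI0 (by nlinarith) (by norm_num)
    _ = (Cc * Cc * 2^b) ^ (1/2 : ℝ) * (jb (m₀ - m₁ + m₂ - m₃) ^ (-(2*b))) ^ (1/2 : ℝ) :=
        Real.mul_rpow (by positivity) (jb_rpow_nonneg _ _)
    _ = (Cc * Cc * 2^b) ^ (1/2 : ℝ) * jb (m₀ - m₁ + m₂ - m₃) ^ (-b) := by
        rw [← Real.rpow_mul (jb_pos _).le, show -(2*b) * (1/2 : ℝ) = -b by ring]

/-- Estimate of the term `A₂`: for `b > 1/2`, `α > 0` and nonnegative `n₀, n₁, n₂, n₃`, the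
square root of the constrained triple integral is bounded by
`C ⟨n₀^{2α} − n₁^{2α} + n₂^{2α} − n₃^{2α}⟩^{−b}`. -/
theorem stmt_4 (b α : ℝ) (hb : 1/2 < b) (hα : 0 < α) :
    ∃ C : ℝ, 0 < C ∧ ∀ (n₀ n₁ n₂ n₃ : ℝ), 0 ≤ n₀ → 0 ≤ n₁ → 0 ≤ n₂ → 0 ≤ n₃ →
    ∀ τ : ℝ,
      (∫ τ₁ : ℝ, ∫ τ₂ : ℝ,
          jb (τ - n₀ ^ (2*α)) ^ (-(2*b)) * jb (τ₁ - n₁ ^ (2*α)) ^ (-(2*b)) *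
          jb (τ₂ - n₂ ^ (2*α)) ^ (-(2*b)) * jb ((τ - τ₁ + τ₂) - n₃ ^ (2*α)) ^ (-(2*b))) ^ (1/2 : ℝ)
        ≤ C * jb (n₀ ^ (2*α) - n₁ ^ (2*α) + n₂ ^ (2*α) - n₃ ^ (2*α)) ^ (-b) := by
  obtain ⟨C, hC, h⟩ := main_est hb
  exact ⟨C, hC, fun n₀ n₁ n₂ n₃ _ _ _ _ τ => h _ _ _ _ τ⟩
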